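/- The map φ : C_A → G_A defined by φ(b) := Q_{A,b} is a bijection. Moreover, there exists a constant L_A ≥ 0 such that dist_H(Q_{A,b}, Q_{A,b̃}) ≤ L_A · ‖b − b̃‖_∞ for all b, b̃ ∈ C_A, and conversely ‖b − b̃‖_∞ ≤ dist_H(Q_{A,b}, Q_{A,b̃}) for all b, b̃ ∈ C_A; in particular φ is a (bi-Lipschitz) homeomorphism between (C_A, ‖·‖_∞) and (G_A, dist_H). -/

import Mathlib

open scoped RealInnerProductSpace

noncomputable section

/-- `Q_{A,b} = {x ∈ ℝ^d : a_iᵀx ≤ b_i for all i}`. -/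
def Qset {d N : ℕ} (a : Fin N → EuclideanSpace ℝ (Fin d)) (b : Fin N → ℝ) :
    Set (EuclideanSpace ℝ (Fin d)) :=
  {x | ∀ i, ⟪a i, x⟫ ≤ b i}

namespace HoffmanAux

open Topology

variable {d M : ℕ}

local notation "E" => EuclideanSpace ℝ (Fin d)

def coneOf (a : Fin M → E) (s : Finset (Fin M)) : Set E :=
  {v | ∃ μ : Fin M → ℝ, (∀ j, 0 ≤ μ j) ∧ v = ∑ j ∈ s, μ j • a j}

theorem cara (a : Fin M → E) :
    ∀ (s : Finset (Fin M)) (μ : Fin M → ℝ), (∀ j, 0 ≤ μ j) →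
      ∃ t ⊆ s, LinearIndependent ℝ (fun j : t => a j) ∧
        ∃ ν : Fin M → ℝ, (∀ j, 0 ≤ ν j) ∧
          ∑ j ∈ s, μ j • a j = ∑ j ∈ t, ν j • a j := by
  intro s
  induction s using Finset.strongInduction with
  | _ s ih =>
    intro μ hμ
    by_cases hli : LinearIndependent ℝ (fun j : s => a j)
    · exact ⟨s, le_refl _, hli, μ, hμ, rfl⟩
    · obtain ⟨g, hg0, j₁, hj₁⟩ := Fintype.not_linearIndependent_iff.mp hli
      -- extend g to Fin M
      set c : Fin M → ℝ := fun j => if h : j ∈ s then g ⟨j, h⟩ else 0 with hc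
      have hcs : ∑ j ∈ s, c j • a j = 0 := by
        rw [← hg0, ← Finset.sum_attach s (fun j => c j • a j)]
        refine Finset.sum_congr rfl fun j _ => ?_
        simp [hc, j.2]
      have hcsum : ∀ r : ℝ, ∑ j ∈ s, (μ j - r * c j) • a j = ∑ j ∈ s, μ j • a j := by
        intro r
        rw [Finset.sum_congr rfl (fun j _ => sub_smul (μ j) (r * c j) (a j)),
          Finset.sum_sub_distrib]
        have : ∑ j ∈ s, (r * c j) • a j = r • ∑ j ∈ s, c j • a j := by
          rw [Finset.smul_sum]
          exact Finset.sum_congr rfl fun j _ => by rw [smul_smul]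
        rw [this, hcs, smul_zero, sub_zero]
      -- some coordinate of c is nonzero on s; wlog positive
      have hex : ∃ c' : Fin M → ℝ, (∑ j ∈ s, c' j • a j = 0) ∧
          (∀ r : ℝ, ∑ j ∈ s, (μ j - r * c' j) • a j = ∑ j ∈ s, μ j • a j) ∧
          ∃ j ∈ s, 0 < c' j := by
        rcases lt_or_ge 0 (c j₁) with h | h
        · exact ⟨c, hcs, hcsum, j₁, j₁.2, h⟩
        · refine ⟨-c, by simpa [neg_smul] using hcs, ?_, j₁, j₁.2, ?_⟩
          · intro r
            have := hcsum (-r)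
            simpa [mul_comm, neg_mul, mul_neg] using this
          · have : c j₁ ≠ 0 := by simp [hc, j₁.2, hj₁]
            simp only [Pi.neg_apply]
            cases' lt_or_eq_of_le h with h' h'
            · linarith
            · exact absurd h' this
      clear hcs hcsum hj₁ hg0 hc
      obtain ⟨c, hcs, hcsum, hpos⟩ := hex
      set P : Finset (Fin M) := s.filter (fun j => 0 < c j) with hP
      have hPne : P.Nonempty := by
        obtain ⟨j, hjs, hjc⟩ := hpos
        exact ⟨j, Finset.mem_filter.mpr ⟨hjs, hjc⟩⟩
      obtain ⟨j₀, hj₀P, hj₀min⟩ := P.exists_min_image (fun j => μ j / c j) hPne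
      have hj₀s : j₀ ∈ s := (Finset.mem_filter.mp hj₀P).1
      have hj₀c : 0 < c j₀ := (Finset.mem_filter.mp hj₀P).2
      set r : ℝ := μ j₀ / c j₀ with hr
      have hr0 : 0 ≤ r := div_nonneg (hμ j₀) hj₀c.le
      set ν : Fin M → ℝ := fun j => if j ∈ s then μ j - r * c j else μ j with hν
      have hν0 : ∀ j, 0 ≤ ν j := by
        intro j
        simp only [hν]
        split_ifs with hjs
        · rcases lt_or_ge 0 (c j) with hcj | hcj
          · have h1 : r ≤ μ j / c j := hj₀min j (Finset.mem_filter.mpr ⟨hjs, hcj⟩)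
            rw [le_div_iff₀ hcj] at h1
            linarith
          · nlinarith [hμ j]
        · exact hμ j
      have hνj₀ : ν j₀ = 0 := by
        simp only [hν, if_pos hj₀s, hr]
        field_simp
        ring
      have hsum : ∑ j ∈ s, μ j • a j = ∑ j ∈ s.erase j₀, ν j • a j := by
        have h1 : ∑ j ∈ s, ν j • a j = ∑ j ∈ s, (μ j - r * c j) • a j :=
          Finset.sum_congr rfl fun j hj => by simp [hν, hj]
        rw [← hcsum r, ← h1, ← Finset.add_sum_erase s _ hj₀s, hνj₀, zero_smul, zero_add]
      obtain ⟨t, hts, hli', ν', hν', heq⟩ := ih (s.erase j₀) (Finset.erase_ssubset hj₀s) ν hν0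
      exact ⟨t, hts.trans (Finset.erase_subset _ _), hli', ν', hν', by rw [hsum, heq]⟩

theorem coercive (a : Fin M → E) (t : Finset (Fin M))
    (hli : LinearIndependent ℝ (fun j : t => a j)) :
    ∃ C : ℝ, 0 ≤ C ∧ ∀ μ : Fin M → ℝ, (∀ j, 0 ≤ μ j) →
      ∑ j ∈ t, μ j ≤ C * ‖∑ j ∈ t, μ j • a j‖ := by
  classical
  set T : (↥t → ℝ) →ₗ[ℝ] E := Fintype.linearCombination ℝ (fun j : t => a j) with hT
  have hTapp : ∀ w : ↥t → ℝ, T w = ∑ j : t, w j • a j := fun w =>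
    rfl
  have hinj : Function.Injective T := by
    rw [← LinearMap.ker_eq_bot]
    apply LinearMap.ker_eq_bot'.mpr
    intro w hw
    funext j
    exact Fintype.linearIndependent_iff.mp hli w (by rw [← hTapp]; exact hw) j
  obtain ⟨C₀, hC₀0, key⟩ : ∃ C₀ : ℝ, 0 ≤ C₀ ∧ ∀ w : ↥t → ℝ, ‖w‖ ≤ C₀ * ‖T w‖ := by
    let e : (↥t → ℝ) ≃ₗ[ℝ] LinearMap.range T := LinearEquiv.ofInjective T hinj
    let g := e.symm.toContinuousLinearEquiv.toContinuousLinearMap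
    refine ⟨‖g‖, @norm_nonneg _ _ g, fun w => ?_⟩
    have h1 : e.symm ⟨T w, LinearMap.mem_range_self T w⟩ = w := by
      have : (⟨T w, LinearMap.mem_range_self T w⟩ : LinearMap.range T) = e w := rfl
      rw [this, LinearEquiv.symm_apply_apply]
    have h2 : g ⟨T w, LinearMap.mem_range_self T w⟩ = w := h1
    calc ‖w‖ = ‖g ⟨T w, LinearMap.mem_range_self T w⟩‖ := by rw [h2]
    _ ≤ ‖g‖ * ‖(⟨T w, LinearMap.mem_range_self T w⟩ : LinearMap.range T)‖ := g.le_opNorm _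
    _ = ‖g‖ * ‖T w‖ := rfl
  refine ⟨t.card * C₀, mul_nonneg (Nat.cast_nonneg _) hC₀0, fun μ hμ => ?_⟩
  set w : ↥t → ℝ := fun j => μ j with hw
  have h3 : ∑ j ∈ t, μ j • a j = T w := by
    rw [hTapp, ← Finset.sum_attach t (fun j => μ j • a j)]; rfl
  have h4 : ∑ j ∈ t, μ j = ∑ j : t, w j := (Finset.sum_attach t μ).symm
  have h5 : ∑ j : t, w j ≤ t.card * ‖w‖ := by
    calc ∑ j : t, w j ≤ ∑ j : t, ‖w‖ := by
          refine Finset.sum_le_sum fun j _ => ?_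
          calc w j ≤ |w j| := le_abs_self _
          _ = ‖w j‖ := rfl
          _ ≤ ‖w‖ := norm_le_pi_norm w j
    _ = t.card * ‖w‖ := by simp [Finset.card_univ, mul_comm]
  rw [h3, h4]
  calc ∑ j : t, w j ≤ t.card * ‖w‖ := h5
  _ ≤ t.card * (C₀ * ‖T w‖) := by
      apply mul_le_mul_of_nonneg_left (key w) (Nat.cast_nonneg _)
  _ = t.card * C₀ * ‖T w‖ := by ring

theorem coneOf_mono (a : Fin M → E) {t s : Finset (Fin M)} (hts : t ⊆ s) :
    coneOf a t ⊆ coneOf a s := by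
  classical
  rintro v ⟨μ, hμ, rfl⟩
  refine ⟨fun j => if j ∈ t then μ j else 0, fun j => by dsimp only; split_ifs <;> simp [hμ _], ?_⟩
  rw [← Finset.sum_subset hts (fun x _ hx => by simp [hx])]
  exact Finset.sum_congr rfl fun j hj => by simp [hj]

theorem coneOf_zero_mem (a : Fin M → E) (s : Finset (Fin M)) : (0 : E) ∈ coneOf a s :=
  ⟨0, fun j => le_refl 0, by simp⟩

theorem coneOf_self_mem (a : Fin M → E) (s : Finset (Fin M)) {j : Fin M} (hj : j ∈ s) :
    a j ∈ coneOf a s := by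
  classical
  refine ⟨fun k => if k = j then 1 else 0, fun k => by positivity, ?_⟩
  rw [Finset.sum_eq_single j (fun k _ hk => by simp [hk]) (fun h => absurd hj h)]
  simp

theorem coneOf_smul_mem (a : Fin M → E) (s : Finset (Fin M)) {v : E} {r : ℝ} (hr : 0 ≤ r)
    (hv : v ∈ coneOf a s) : r • v ∈ coneOf a s := by
  obtain ⟨μ, hμ, rfl⟩ := hv
  refine ⟨fun j => r * μ j, fun j => mul_nonneg hr (hμ j), ?_⟩
  rw [Finset.smul_sum]
  exact Finset.sum_congr rfl fun j _ => by rw [smul_smul]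

theorem coneOf_convex (a : Fin M → E) (s : Finset (Fin M)) : Convex ℝ (coneOf a s) := by
  rintro v ⟨μ, hμ, rfl⟩ w ⟨ν, hν, rfl⟩ p q hp hq hpq
  refine ⟨fun j => p * μ j + q * ν j,
    fun j => add_nonneg (mul_nonneg hp (hμ j)) (mul_nonneg hq (hν j)), ?_⟩
  rw [Finset.smul_sum, Finset.smul_sum, ← Finset.sum_add_distrib]
  refine Finset.sum_congr rfl fun j _ => ?_
  rw [smul_smul, smul_smul, ← add_smul]

theorem coneOf_isClosed_of_li (a : Fin M → E) (t : Finset (Fin M))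
    (hli : LinearIndependent ℝ (fun j : t => a j)) : IsClosed (coneOf a t) := by
  classical
  set T : (↥t → ℝ) →ₗ[ℝ] E := Fintype.linearCombination ℝ (fun j : t => a j) with hT
  have hTapp : ∀ w : ↥t → ℝ, T w = ∑ j : t, w j • a j := fun w => rfl
  have hinj : Function.Injective T := by
    rw [← LinearMap.ker_eq_bot]
    apply LinearMap.ker_eq_bot'.mpr
    intro w hw
    funext j
    exact Fintype.linearIndependent_iff.mp hli w (by rw [← hTapp]; exact hw) j
  have hemb : IsClosedEmbedding T := LinearMap.isClosedEmbedding_of_injective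
    (LinearMap.ker_eq_bot.mpr hinj)
  have hKcl : IsClosed {ν : ↥t → ℝ | ∀ j, 0 ≤ ν j} := by
    have : {ν : ↥t → ℝ | ∀ j, 0 ≤ ν j} = ⋂ j, {ν : ↥t → ℝ | 0 ≤ ν j} := by
      ext ν; simp [Set.mem_iInter]
    rw [this]
    exact isClosed_iInter fun j => isClosed_le continuous_const (continuous_apply j)
  have himg : coneOf a t = T '' {ν : ↥t → ℝ | ∀ j, 0 ≤ ν j} := by
    ext v
    constructor
    · rintro ⟨μ, hμ, rfl⟩
      refine ⟨fun j => μ j, fun j => hμ j, ?_⟩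
      rw [hTapp, ← Finset.sum_attach t (fun j => μ j • a j)]; rfl
    · rintro ⟨ν, hν, rfl⟩
      refine ⟨fun j => if h : j ∈ t then ν ⟨j, h⟩ else 0,
        fun j => by dsimp only; split_ifs <;> simp [hν _], ?_⟩
      rw [hTapp, ← Finset.sum_attach t (fun j => (if h : j ∈ t then ν ⟨j, h⟩ else 0) • a j)]
      refine (Finset.sum_congr rfl fun j _ => by simp [j.2]).symm
  rw [himg]
  exact hemb.isClosedMap _ hKcl

theorem coneOf_isClosed (a : Fin M → E) (s : Finset (Fin M)) : IsClosed (coneOf a s) := by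
  classical
  have : coneOf a s = ⋃ t : Finset (Fin M),
      (if t ⊆ s ∧ LinearIndependent ℝ (fun j : t => a j) then coneOf a t else ∅) := by
    ext v
    simp only [Set.mem_iUnion]
    constructor
    · rintro ⟨μ, hμ, rfl⟩
      obtain ⟨t, hts, hli, ν, hν, heq⟩ := cara a s μ hμ
      exact ⟨t, by rw [if_pos ⟨hts, hli⟩]; exact ⟨ν, hν, heq⟩⟩
    · rintro ⟨t, hv⟩
      split_ifs at hv with h
      · exact coneOf_mono a h.1 hv
      · exact absurd hv (Set.notMem_empty v)
  rw [this]
  refine isClosed_iUnion_of_finite fun t => ?_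
  split_ifs with h
  · exact coneOf_isClosed_of_li a t h.2
  · exact isClosed_empty

theorem proj_obtuse {K : Set E} (hK : IsClosed K) (hconv : Convex ℝ K) (hne : K.Nonempty)
    (x : E) : ∃ y ∈ K, ∀ z ∈ K, ⟪x - y, z - y⟫ ≤ 0 := by
  obtain ⟨y, hyK, hy⟩ := exists_norm_eq_iInf_of_complete_convex hne
    (hK.isComplete) hconv x
  exact ⟨y, hyK, (norm_eq_iInf_iff_real_inner_le_zero hconv hyK).mp hy⟩

theorem sep (a : Fin M → E) (s : Finset (Fin M)) (v : E) (hv : v ∉ coneOf a s) :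
    ∃ u : E, (∀ j ∈ s, ⟪a j, u⟫ ≤ 0) ∧ 0 < ⟪v, u⟫ := by
  obtain ⟨p, hpK, hp⟩ := proj_obtuse (coneOf_isClosed a s) (coneOf_convex a s)
    ⟨0, coneOf_zero_mem a s⟩ v
  set u : E := v - p with hu
  have hup : ⟪u, p⟫ = 0 := by
    have h1 : ⟪u, (0 : E) - p⟫ ≤ 0 := hp 0 (coneOf_zero_mem a s)
    have h2 : ⟪u, (2 : ℝ) • p - p⟫ ≤ 0 := hp ((2 : ℝ) • p)
      (coneOf_smul_mem a s (by norm_num) hpK)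
    have h3 : ((2 : ℝ) • p - p) = p := by module
    rw [h3] at h2
    rw [zero_sub, inner_neg_right] at h1
    linarith
  have hKle : ∀ w ∈ coneOf a s, ⟪u, w⟫ ≤ 0 := by
    intro w hw
    have := hp w hw
    rw [inner_sub_right, hup, sub_zero] at this
    exact this
  refine ⟨u, fun j hj => by rw [real_inner_comm]; exact hKle (a j) (coneOf_self_mem a s hj), ?_⟩
  have hune : u ≠ 0 := by
    intro h
    apply hv
    rw [hu, sub_eq_zero] at h
    rw [h]; exact hpK
  have h4 : ⟪u, v⟫ = ‖u‖ ^ 2 := by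
    have h5 : ⟪u, v - p⟫ = ⟪u, v⟫ - ⟪u, p⟫ := inner_sub_right u v p
    rw [hup, sub_zero] at h5
    rw [← h5, ← hu]
    exact real_inner_self_eq_norm_sq u
  rw [real_inner_comm, h4]
  have : 0 < ‖u‖ := norm_pos_iff.mpr hune
  positivity


theorem qset_closed (a : Fin M → E) (c : Fin M → ℝ) : IsClosed (Qset a c) := by
  have : Qset a c = ⋂ i, {x : E | ⟪a i, x⟫ ≤ c i} := by
    ext x; simp [Qset, Set.mem_iInter]
  rw [this]
  exact isClosed_iInter fun i =>
    isClosed_le (Continuous.inner continuous_const continuous_id) continuous_const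

theorem qset_convex (a : Fin M → E) (c : Fin M → ℝ) : Convex ℝ (Qset a c) := by
  intro x hx y hy p q hp hq hpq i
  have := hx i; have := hy i
  calc ⟪a i, p • x + q • y⟫ = p * ⟪a i, x⟫ + q * ⟪a i, y⟫ := by
        rw [inner_add_right, real_inner_smul_right, real_inner_smul_right]
  _ ≤ p * c i + q * c i := by
        apply add_le_add (mul_le_mul_of_nonneg_left (hx i) hp)
          (mul_le_mul_of_nonneg_left (hy i) hq)
  _ = c i := by rw [← add_mul, hpq, one_mul]

theorem proj_mem_cone (a : Fin M → E) (c : Fin M → ℝ) (hne : (Qset a c).Nonempty) (x : E) :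
    ∃ y ∈ Qset a c, ∃ s : Finset (Fin M), (∀ j ∈ s, ⟪a j, y⟫ = c j) ∧
      x - y ∈ coneOf a s := by
  classical
  obtain ⟨y, hyQ, hy⟩ := proj_obtuse (qset_closed a c) (qset_convex a c) hne x
  set s : Finset (Fin M) := Finset.univ.filter fun j => ⟪a j, y⟫ = c j with hs
  refine ⟨y, hyQ, s, fun j hj => (Finset.mem_filter.mp hj).2, ?_⟩
  by_contra hvc
  obtain ⟨u, hu1, hu2⟩ := sep a s (x - y) hvc
  set I : Finset (Fin M) := Finset.univ.filter fun j => 0 < ⟪a j, u⟫ with hI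
  have hIlt : ∀ j ∈ I, ⟪a j, y⟫ < c j := by
    intro j hj
    have hju : 0 < ⟪a j, u⟫ := (Finset.mem_filter.mp hj).2
    have hjs : j ∉ s := fun hjs => absurd (hu1 j hjs) (not_le.mpr hju)
    have : ⟪a j, y⟫ ≠ c j := fun h => hjs (Finset.mem_filter.mpr ⟨Finset.mem_univ j, h⟩)
    exact lt_of_le_of_ne (hyQ j) this
  set g : Fin M → ℝ := fun j => (c j - ⟪a j, y⟫) / ⟪a j, u⟫ with hg
  set F : Finset ℝ := insert (1 : ℝ) (I.image g) with hF
  have hFne : F.Nonempty := Finset.insert_nonempty _ _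
  set ε : ℝ := F.min' hFne with hε
  have hε1 : ε ≤ 1 := Finset.min'_le _ _ (Finset.mem_insert_self _ _)
  have hεg : ∀ j ∈ I, ε ≤ g j := fun j hj =>
    Finset.min'_le _ _ (Finset.mem_insert_of_mem (Finset.mem_image_of_mem g hj))
  have hεpos : 0 < ε := by
    have hmem := F.min'_mem hFne
    rw [← hε] at hmem
    rcases Finset.mem_insert.mp hmem with h | h
    · rw [h]; norm_num
    · obtain ⟨j, hjI, hje⟩ := Finset.mem_image.mp h
      rw [← hje]
      exact div_pos (sub_pos.mpr (hIlt j hjI)) ((Finset.mem_filter.mp hjI).2)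
  have hyu : y + ε • u ∈ Qset a c := by
    intro j
    have hsplit : ⟪a j, y + ε • u⟫ = ⟪a j, y⟫ + ε * ⟪a j, u⟫ := by
      rw [inner_add_right, real_inner_smul_right]
    rw [hsplit]
    rcases le_or_gt (⟪a j, u⟫) 0 with h | h
    · nlinarith [hyQ j]
    · have hjI : j ∈ I := Finset.mem_filter.mpr ⟨Finset.mem_univ j, h⟩
      have := hεg j hjI
      rw [hg] at this
      have h2 : ε * ⟪a j, u⟫ ≤ c j - ⟪a j, y⟫ := by
        rw [← le_div_iff₀ h]
        exact this
      linarith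
  have hcontr := hy (y + ε • u) hyu
  have : ⟪x - y, y + ε • u - y⟫ = ε * ⟪x - y, u⟫ := by
    rw [add_sub_cancel_left, real_inner_smul_right]
  rw [this] at hcontr
  nlinarith

theorem hoffman (a : Fin M → E) :
    ∃ L : ℝ, 0 ≤ L ∧ ∀ (c : Fin M → ℝ) (x : E) (ε : ℝ), 0 ≤ ε →
      (Qset a c).Nonempty → (∀ i, ⟪a i, x⟫ ≤ c i + ε) →
        ∃ y ∈ Qset a c, ‖x - y‖ ≤ L * ε := by
  classical
  have hch : ∀ t : Finset (Fin M), ∃ C : ℝ, 0 ≤ C ∧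
      (LinearIndependent ℝ (fun j : t => a j) → ∀ μ : Fin M → ℝ, (∀ j, 0 ≤ μ j) →
        ∑ j ∈ t, μ j ≤ C * ‖∑ j ∈ t, μ j • a j‖) := by
    intro t
    by_cases h : LinearIndependent ℝ (fun j : t => a j)
    · obtain ⟨C, hC0, hC⟩ := coercive a t h
      exact ⟨C, hC0, fun _ => hC⟩
    · exact ⟨0, le_refl _, fun h' => absurd h' h⟩
  choose f hf0 hf using hch
  set L : ℝ := ∑ t : Finset (Fin M), f t with hL
  have hL0 : 0 ≤ L := Finset.sum_nonneg fun t _ => hf0 t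
  have hLt : ∀ t : Finset (Fin M), f t ≤ L :=
    fun t => Finset.single_le_sum (fun t _ => hf0 t) (Finset.mem_univ t)
  refine ⟨L, hL0, fun c x ε hε hne hx => ?_⟩
  obtain ⟨y, hyQ, s, hact, hcone⟩ := proj_mem_cone a c hne x
  obtain ⟨μ, hμ0, hμeq⟩ := hcone
  obtain ⟨t, hts, hli, ν, hν0, hνeq⟩ := cara a s μ hμ0
  have hxy : x - y = ∑ j ∈ t, ν j • a j := by rw [hμeq, hνeq]
  have hkey : ‖x - y‖ ^ 2 ≤ (∑ j ∈ t, ν j) * ε := by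
    have h1 : ‖x - y‖ ^ 2 = ∑ j ∈ t, ν j * ⟪a j, x - y⟫ := by
      rw [← real_inner_self_eq_norm_sq]
      nth_rewrite 2 [hxy]
      rw [inner_sum]
      exact Finset.sum_congr rfl fun j _ => by
        rw [real_inner_smul_right, real_inner_comm]
    rw [h1, Finset.sum_mul]
    refine Finset.sum_le_sum fun j hj => ?_
    have hju : ⟪a j, x - y⟫ = ⟪a j, x⟫ - c j := by
      rw [inner_sub_right, hact j (hts hj)]
    rw [hju]
    have := hx j
    exact mul_le_mul_of_nonneg_left (by linarith) (hν0 j)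
  have hsum : ∑ j ∈ t, ν j ≤ L * ‖x - y‖ := by
    calc ∑ j ∈ t, ν j ≤ f t * ‖∑ j ∈ t, ν j • a j‖ := hf t hli ν hν0
    _ = f t * ‖x - y‖ := by rw [← hxy]
    _ ≤ L * ‖x - y‖ := mul_le_mul_of_nonneg_right (hLt t) (norm_nonneg _)
  refine ⟨y, hyQ, ?_⟩
  rcases eq_or_lt_of_le (norm_nonneg (x - y)) with h | h
  · rw [← h]; positivity
  · nlinarith


theorem lp_attain (a : Fin M → E) (c : Fin M → ℝ) (hne : (Qset a c).Nonempty) (i₀ : Fin M) :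
    ∃ x ∈ Qset a c, ∀ z ∈ Qset a c, ⟪a i₀, z⟫ ≤ ⟪a i₀, x⟫ := by
  classical
  set f : E → ℝ := fun z => ⟪a i₀, z⟫ with hfdef
  have hfc : Continuous f := Continuous.inner continuous_const continuous_id
  have hbdd : BddAbove (f '' Qset a c) := ⟨c i₀, by rintro _ ⟨z, hz, rfl⟩; exact hz i₀⟩
  have hine : (f '' Qset a c).Nonempty := hne.image f
  set S : ℝ := sSup (f '' Qset a c) with hS
  have hle : ∀ z ∈ Qset a c, f z ≤ S := fun z hz => le_csSup hbdd ⟨z, hz, rfl⟩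
  set a' : Fin (M + 1) → E := Fin.snoc a (-(a i₀)) with ha'
  set c' : ℝ → (Fin (M + 1) → ℝ) := fun r => Fin.snoc c (-r) with hc'
  have hmem : ∀ (r : ℝ) (z : E), z ∈ Qset a' (c' r) ↔ (z ∈ Qset a c ∧ r ≤ f z) := by
    intro r z
    constructor
    · intro h
      refine ⟨fun i => ?_, ?_⟩
      · have := h (Fin.castSucc i)
        simpa [ha', hc', Fin.snoc_castSucc] using this
      · have := h (Fin.last M)
        simp only [ha', hc', Fin.snoc_last, inner_neg_left] at this
        simp only [hfdef]
        linarith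
    · rintro ⟨h1, h2⟩ i
      refine Fin.lastCases ?_ ?_ i
      · simp only [ha', hc', Fin.snoc_last, inner_neg_left]
        simp only [hfdef] at h2
        linarith
      · intro j
        simpa [ha', hc', Fin.snoc_castSucc] using h1 j
  obtain ⟨L, hL0, hHof⟩ := hoffman a'
  set t : ℕ → ℝ := fun n => S - (1 / 2) ^ n with ht
  have hts : ∀ n, t n < S := fun n => sub_lt_self _ (by positivity)
  have hPn : ∀ n, (Qset a' (c' (t n))).Nonempty := by
    intro n
    obtain ⟨w, hw, hwlt⟩ := exists_lt_of_lt_csSup hine (hts n)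
    obtain ⟨z, hz, rfl⟩ := hw
    exact ⟨z, (hmem _ _).mpr ⟨hz, hwlt.le⟩⟩
  have key : ∀ (n : ℕ) (z : E), z ∈ Qset a' (c' (t n)) →
      ∃ y ∈ Qset a' (c' (t (n + 1))), ‖z - y‖ ≤ L * (1 / 2) ^ (n + 1) := by
    intro n z hz
    apply hHof (c' (t (n + 1))) z ((1 / 2) ^ (n + 1)) (by positivity) (hPn (n + 1))
    intro i
    obtain ⟨hz1, hz2⟩ := (hmem _ _).mp hz
    refine Fin.lastCases ?_ ?_ i
    · simp only [ha', hc', Fin.snoc_last, inner_neg_left, ht]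
      have hpow : ((1 : ℝ) / 2) ^ (n + 1) + (1 / 2) ^ (n + 1) = (1 / 2) ^ n := by ring
      simp only [ht] at hz2
      simp only [hfdef] at hz2
      linarith
    · intro j
      simp only [ha', hc', Fin.snoc_castSucc]
      have := hz1 j
      have hp : (0 : ℝ) ≤ (1 / 2) ^ (n + 1) := by positivity
      linarith
  set u : ∀ n : ℕ, {z : E // z ∈ Qset a' (c' (t n))} := fun n =>
    Nat.rec ⟨(hPn 0).some, (hPn 0).some_mem⟩
      (fun n ih => ⟨(key n ih.1 ih.2).choose, (key n ih.1 ih.2).choose_spec.1⟩) n with hu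
  set x : ℕ → E := fun n => (u n).1 with hx
  have hstep : ∀ n, ‖x n - x (n + 1)‖ ≤ L * (1 / 2) ^ (n + 1) := fun n =>
    (key n (u n).1 (u n).2).choose_spec.2
  have hcau : CauchySeq x := by
    apply cauchySeq_of_le_geometric (1 / 2) (L * (1 / 2)) (by norm_num)
    intro n
    rw [dist_eq_norm]
    calc ‖x n - x (n + 1)‖ ≤ L * (1 / 2) ^ (n + 1) := hstep n
    _ = L * (1 / 2) * (1 / 2) ^ n := by ring
  obtain ⟨xlim, hxlim⟩ := cauchySeq_tendsto_of_complete hcau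
  have hxQ : ∀ n, x n ∈ Qset a c := fun n => ((hmem _ _).mp (u n).2).1
  have hxlimQ : xlim ∈ Qset a c :=
    (qset_closed a c).mem_of_tendsto hxlim (Filter.Eventually.of_forall hxQ)
  have hftend : Filter.Tendsto (fun n => f (x n)) Filter.atTop (nhds (f xlim)) :=
    (hfc.tendsto xlim).comp hxlim
  have httend : Filter.Tendsto t Filter.atTop (nhds S) := by
    have h0 : Filter.Tendsto (fun n : ℕ => ((1 : ℝ) / 2) ^ n) Filter.atTop (nhds 0) :=
      tendsto_pow_atTop_nhds_zero_of_lt_one (by norm_num) (by norm_num)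
    have h1 := (tendsto_const_nhds (x := S) (f := Filter.atTop (α := ℕ))).sub h0
    rw [sub_zero] at h1
    exact h1
  have hSle : S ≤ f xlim :=
    le_of_tendsto_of_tendsto httend hftend
      (Filter.Eventually.of_forall fun n => ((hmem _ _).mp (u n).2).2)
  exact ⟨xlim, hxlimQ, fun z hz => (hle z hz).trans hSle⟩


theorem lower (a : Fin M → E) (ha_norm : ∀ i, ‖a i‖ = 1) (b btil : Fin M → ℝ) (i : Fin M)
    (hb : ∃ x ∈ Qset a b, ⟪a i, x⟫ = b i) :
    ENNReal.ofReal (b i - btil i) ≤ EMetric.hausdorffEdist (Qset a b) (Qset a btil) := by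
  rcases le_or_gt (b i - btil i) 0 with h | h
  · rw [ENNReal.ofReal_eq_zero.mpr h]
    exact zero_le
  · obtain ⟨x, hxQ, hxi⟩ := hb
    refine le_trans ?_ (EMetric.infEdist_le_hausdorffEdist_of_mem hxQ)
    rw [EMetric.le_infEdist]
    intro y hy
    rw [edist_dist]
    apply ENNReal.ofReal_le_ofReal
    have h1 : ⟪a i, x - y⟫ ≤ ‖x - y‖ := by
      calc ⟪a i, x - y⟫ ≤ ‖a i‖ * ‖x - y‖ := real_inner_le_norm _ _
      _ = ‖x - y‖ := by rw [ha_norm i, one_mul]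
    have h2 : ⟪a i, x - y⟫ = b i - ⟪a i, y⟫ := by rw [inner_sub_right, hxi]
    have h3 : ⟪a i, y⟫ ≤ btil i := hy i
    rw [dist_eq_norm]
    linarith

end HoffmanAux

/-- `C_A = {b : for every i there is x ∈ Q_{A,b} with a_iᵀx = b_i}`. -/
def CA {d N : ℕ} (a : Fin N → EuclideanSpace ℝ (Fin d)) : Set (Fin N → ℝ) :=
  {b | ∀ i, ∃ x ∈ Qset a b, ⟪a i, x⟫ = b i}

/-- `G_A = {Q_{A,b} : b ∈ ℝ^N} \ {∅}`. -/
def GA {d N : ℕ} (a : Fin N → EuclideanSpace ℝ (Fin d)) :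
    Set (Set (EuclideanSpace ℝ (Fin d))) :=
  {S | (∃ b, S = Qset a b) ∧ S.Nonempty}

theorem stmt_2 (d N : ℕ) (hd : 1 ≤ d) (hN : 1 ≤ N)
    (a : Fin N → EuclideanSpace ℝ (Fin d))
    (ha_inj : Function.Injective a) (ha_norm : ∀ i, ‖a i‖ = 1) :
    Set.BijOn (fun b => Qset a b) (CA a) (GA a) ∧
    (∃ L : ℝ, 0 ≤ L ∧ ∀ b ∈ CA a, ∀ btil ∈ CA a,
      EMetric.hausdorffEdist (Qset a b) (Qset a btil) ≤ ENNReal.ofReal (L * ‖b - btil‖)) ∧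
    (∀ b ∈ CA a, ∀ btil ∈ CA a,
      ENNReal.ofReal ‖b - btil‖ ≤ EMetric.hausdorffEdist (Qset a b) (Qset a btil)) := by
  classical
  have i0 : Fin N := ⟨0, hN⟩
  have hQne : ∀ b ∈ CA a, (Qset a b).Nonempty := fun b hb => (hb i0).imp fun x hx => hx.1
  obtain ⟨L, hL0, hHof⟩ := HoffmanAux.hoffman a
  have habs : ∀ (p q : Fin N → ℝ) (i : Fin N), p i - q i ≤ ‖p - q‖ := by
    intro p q i
    have h := norm_le_pi_norm (p - q) i
    rw [Pi.sub_apply, Real.norm_eq_abs] at h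
    exact (le_abs_self _).trans h
  refine ⟨⟨fun b hb => ⟨⟨b, rfl⟩, hQne b hb⟩, ?_, ?_⟩, ⟨L, hL0, ?_⟩, ?_⟩
  · -- InjOn
    intro b hb btil hbtil heq
    simp only at heq
    funext i
    obtain ⟨x, hxQ, hxi⟩ := hb i
    obtain ⟨y, hyQ, hyi⟩ := hbtil i
    have hx' : x ∈ Qset a btil := heq ▸ hxQ
    have hy' : y ∈ Qset a b := heq ▸ hyQ
    exact le_antisymm (hxi ▸ hx' i) (hyi ▸ hy' i)
  · -- SurjOn
    rintro S ⟨⟨c, rfl⟩, hSne⟩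
    have hmax := fun i => HoffmanAux.lp_attain a c hSne i
    choose xm hxmQ hxmax using hmax
    set b : Fin N → ℝ := fun i => ⟪a i, xm i⟫ with hbdef
    have hQeq : Qset a b = Qset a c := by
      ext z
      constructor
      · intro hz i
        exact (hz i).trans (hxmQ i i)
      · intro hz i
        exact hxmax i z hz
    have hbCA : b ∈ CA a := fun i => ⟨xm i, hQeq ▸ hxmQ i, rfl⟩
    exact ⟨b, hbCA, hQeq⟩
  · -- upper bound
    intro b hb btil hbtil
    have key : ∀ p q : Fin N → ℝ, (Qset a q).Nonempty → (∀ i, p i ≤ q i + ‖b - btil‖) →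
        ∀ x ∈ Qset a p, EMetric.infEdist x (Qset a q) ≤ ENNReal.ofReal (L * ‖b - btil‖) := by
      intro p q hqne hpq x hx
      obtain ⟨y, hyQ, hyd⟩ := hHof q x ‖b - btil‖ (norm_nonneg _) hqne
        (fun i => (hx i).trans (hpq i))
      calc EMetric.infEdist x (Qset a q) ≤ edist x y := EMetric.infEdist_le_edist_of_mem hyQ
      _ = ENNReal.ofReal (dist x y) := by rw [edist_dist]
      _ ≤ ENNReal.ofReal (L * ‖b - btil‖) :=
          ENNReal.ofReal_le_ofReal (by rw [dist_eq_norm]; exact hyd)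
    apply EMetric.hausdorffEdist_le_of_infEdist
    · exact key b btil (hQne _ hbtil) (fun i => by linarith [habs b btil i])
    · refine key btil b (hQne _ hb) (fun i => ?_)
      have := habs btil b i
      rw [norm_sub_rev] at this
      linarith
  · -- lower bound
    intro b hb btil hbtil
    obtain ⟨i, hi⟩ : ∃ i : Fin N, ‖b - btil‖ = |b i - btil i| := by
      obtain ⟨i, _, hi⟩ := Finset.exists_mem_eq_sup (Finset.univ : Finset (Fin N))
        ⟨i0, Finset.mem_univ i0⟩ (fun i => ‖(b - btil) i‖₊)
      refine ⟨i, ?_⟩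
      rw [Pi.norm_def, hi]
      simp [Real.norm_eq_abs]
    rcases le_total (btil i) (b i) with h | h
    · have : ‖b - btil‖ = b i - btil i := by rw [hi, abs_of_nonneg (by linarith)]
      rw [this]
      exact HoffmanAux.lower a ha_norm b btil i (hb i)
    · have : ‖b - btil‖ = btil i - b i := by rw [hi, abs_of_nonpos (by linarith), neg_sub]
      rw [this, EMetric.hausdorffEdist, Metric.hausdorffEDist_comm]
      exact HoffmanAux.lower a ha_norm btil b i (hbtil i)
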